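/- (Proposition 4, vertical variant: expansion of a URA by a Golay array pair.) Let L, K, N, M ≥ 1, let (U, V) be a Golay complementary array pair of unimodular L×K matrices, and let W_PA, W_PB : {0,…,N−1}×{0,…,M−1} → ℂ be arbitrary matrices. Define 2LN×KM matrices W_A, W_B by: for 0 ≤ l ≤ L−1, 0 ≤ k ≤ K−1, 0 ≤ n ≤ N−1, 0 ≤ m ≤ M−1, W_A(lN+n, kM+m) = U(l,k)·W_PA(n,m), W_A(LN+lN+n, kM+m) = −V(l,k)·conj(W_PB(N−1−n, M−1−m)), W_B(lN+n, kM+m) = U(l,k)·W_PB(n,m), W_B(LN+lN+n, kM+m) = V(l,k)·conj(W_PA(N−1−n, M−1−m)). Then for all ψ_y, ψ_z ∈ ℝ, |F_{W_A}(ψ_y,ψ_z)|² + |F_{W_B}(ψ_y,ψ_z)|² = 2LK·( |F_{W_PA}(ψ_y,ψ_z)|² + |F_{W_PB}(ψ_y,ψ_z)|² ). -/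

import Mathlib

/-- The one-dimensional array factor of a length-`M` sequence `u` at spatial
frequency `ψ`: `F_u(ψ) = Σ_{m=0}^{M-1} u(m) · exp(i·m·ψ)`. -/
noncomputable def arrayFactor (M : ℕ) (u : ℕ → ℂ) (ψ : ℝ) : ℂ :=
  ∑ m ∈ Finset.range M, u m * Complex.exp (Complex.I * (m : ℂ) * (ψ : ℂ))

/-- The aperiodic autocorrelation of a length-`M` sequence `u` at shift `τ`:
`R_u(τ) = Σ_{m=0}^{M-1-τ} u(m) · conj(u(m+τ))`. -/
noncomputable def aacf (M : ℕ) (u : ℕ → ℂ) (τ : ℕ) : ℂ :=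
  ∑ m ∈ Finset.range (M - τ), u m * (starRingEnd ℂ) (u (m + τ))

/-- The two-dimensional array factor of an `N×M` matrix `W` at `(ψ_y, ψ_z)`:
`F_W(ψ_y,ψ_z) = Σ_{n=0}^{N-1} Σ_{m=0}^{M-1} W(n,m) · exp(i·(n·ψ_z + m·ψ_y))`. -/
noncomputable def arrayFactor2 (N M : ℕ) (W : ℕ → ℕ → ℂ) (ψy ψz : ℝ) : ℂ :=
  ∑ n ∈ Finset.range N, ∑ m ∈ Finset.range M,
    W n m * Complex.exp (Complex.I * ((n : ℂ) * (ψz : ℂ) + (m : ℂ) * (ψy : ℂ)))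

/-- The two-dimensional aperiodic autocorrelation of an `N×M` matrix `W` at integer
shifts `(τ_n, τ_m)`: the sum of `W(n,m)·conj(W(n+τ_n, m+τ_m))` over all pairs
`(n,m)` with `0 ≤ n, n+τ_n ≤ N−1` and `0 ≤ m, m+τ_m ≤ M−1`. -/
noncomputable def aacf2 (N M : ℕ) (W : ℕ → ℕ → ℂ) (τn τm : ℤ) : ℂ :=
  ∑ n ∈ Finset.range N, ∑ m ∈ Finset.range M,
    if 0 ≤ (n : ℤ) + τn ∧ (n : ℤ) + τn < (N : ℤ) ∧
        0 ≤ (m : ℤ) + τm ∧ (m : ℤ) + τm < (M : ℤ) then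
      W n m * (starRingEnd ℂ) (W ((n : ℤ) + τn).toNat ((m : ℤ) + τm).toNat)
    else 0

/-- `(U, V)` is a Golay complementary array pair of `N×M` matrices: the sum of their
two-dimensional aperiodic autocorrelations vanishes at every nonzero shift. -/
def IsGolayArrayPair (N M : ℕ) (U V : ℕ → ℕ → ℂ) : Prop :=
  ∀ τn τm : ℤ, |τn| ≤ (N : ℤ) - 1 → |τm| ≤ (M : ℤ) - 1 → ¬(τn = 0 ∧ τm = 0) →
    aacf2 N M U τn τm + aacf2 N M V τn τm = 0

section Helpers
open Finset Complex

lemma sum_range_mul_eq (a b : ℕ) (f : ℕ → ℂ) :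
    ∑ x ∈ range (a * b), f x = ∑ i ∈ range a, ∑ j ∈ range b, f (i * b + j) := by
  induction a with
  | zero => simp
  | succ a ih =>
      rw [Nat.succ_mul, Finset.sum_range_add, ih, Finset.sum_range_succ]

lemma pair_sum (L : ℕ) (f : ℕ → ℕ → ℂ) :
    ∑ l ∈ range L, ∑ l' ∈ range L, f l l'
    = ∑ τ ∈ Finset.Icc (1 - (L:ℤ)) ((L:ℤ)-1), ∑ l ∈ range L,
        if 0 ≤ (l:ℤ) + τ ∧ (l:ℤ) + τ < (L:ℤ) then f l ((l:ℤ) + τ).toNat else 0 := by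
  conv_rhs => rw [Finset.sum_comm]
  refine Finset.sum_congr rfl fun l hl => ?_
  simp only [Finset.mem_range] at hl
  have hinj : Set.InjOn (fun l' : ℕ => (l' : ℤ) - l) (range L) := by
    intro x _ y _ h; simpa using h
  have himg : ∑ τ ∈ (range L).image (fun l' : ℕ => (l' : ℤ) - l),
      (if 0 ≤ (l:ℤ) + τ ∧ (l:ℤ) + τ < (L:ℤ) then f l ((l:ℤ) + τ).toNat else 0)
      = ∑ l' ∈ range L, f l l' := by
    rw [Finset.sum_image hinj]
    refine Finset.sum_congr rfl fun l' hl' => ?_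
    simp only [Finset.mem_range] at hl'
    have h1 : (l:ℤ) + ((l':ℤ) - l) = l' := by ring
    rw [h1, if_pos ⟨Int.natCast_nonneg l', by exact_mod_cast hl'⟩, Int.toNat_natCast]
  rw [← himg]
  refine Finset.sum_subset ?_ ?_
  · intro τ hτ
    rw [Finset.mem_image] at hτ
    obtain ⟨l', hl', rfl⟩ := hτ
    rw [Finset.mem_range] at hl'
    rw [Finset.mem_Icc]
    omega
  · intro τ hτ hτ'
    rw [if_neg]
    intro ⟨h1, h2⟩
    apply hτ'
    rw [Finset.mem_image]
    refine ⟨((l:ℤ) + τ).toNat, ?_, by omega⟩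
    rw [Finset.mem_range]
    omega



lemma FconjF (L K : ℕ) (W : ℕ → ℕ → ℂ) (α β : ℝ) :
    arrayFactor2 L K W α β * (starRingEnd ℂ) (arrayFactor2 L K W α β)
    = ∑ τn ∈ Finset.Icc (1-(L:ℤ)) ((L:ℤ)-1), ∑ τm ∈ Finset.Icc (1-(K:ℤ)) ((K:ℤ)-1),
        aacf2 L K W τn τm * Complex.exp (-Complex.I * ((τn:ℂ)*(β:ℂ) + (τm:ℂ)*(α:ℂ))) := by
  have hconj : (starRingEnd ℂ) (arrayFactor2 L K W α β)
      = ∑ l' ∈ range L, ∑ k' ∈ range K, (starRingEnd ℂ) (W l' k') *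
          Complex.exp (-Complex.I * ((l':ℂ)*(β:ℂ) + (k':ℂ)*(α:ℂ))) := by
    simp only [arrayFactor2, map_sum, map_mul, ← Complex.exp_conj, map_add,
      Complex.conj_I, Complex.conj_ofReal, map_natCast]
  have step1 : arrayFactor2 L K W α β * (starRingEnd ℂ) (arrayFactor2 L K W α β)
      = ∑ l ∈ range L, ∑ l' ∈ range L, ∑ k ∈ range K, ∑ k' ∈ range K,
          (W l k * Complex.exp (Complex.I * ((l:ℂ)*(β:ℂ) + (k:ℂ)*(α:ℂ)))) *
          ((starRingEnd ℂ) (W l' k') *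
            Complex.exp (-Complex.I * ((l':ℂ)*(β:ℂ) + (k':ℂ)*(α:ℂ)))) := by
    rw [hconj, arrayFactor2, Finset.sum_mul_sum]
    exact Finset.sum_congr rfl fun l _ => Finset.sum_congr rfl fun l' _ =>
      Finset.sum_mul_sum _ _ _ _
  rw [step1, pair_sum L]
  refine Finset.sum_congr rfl fun τn hτn => ?_
  have hsplit : ∀ l : ℕ,
      (if 0 ≤ (l:ℤ) + τn ∧ (l:ℤ) + τn < (L:ℤ) then
        ∑ k ∈ range K, ∑ k' ∈ range K,
          (W l k * Complex.exp (Complex.I * ((l:ℂ)*(β:ℂ) + (k:ℂ)*(α:ℂ)))) *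
          ((starRingEnd ℂ) (W ((l:ℤ)+τn).toNat k') *
            Complex.exp (-Complex.I * ((((l:ℤ)+τn).toNat : ℂ)*(β:ℂ) + (k':ℂ)*(α:ℂ))))
       else 0)
      = ∑ k ∈ range K, ∑ k' ∈ range K,
          (if 0 ≤ (l:ℤ) + τn ∧ (l:ℤ) + τn < (L:ℤ) then
            (W l k * Complex.exp (Complex.I * ((l:ℂ)*(β:ℂ) + (k:ℂ)*(α:ℂ)))) *
            ((starRingEnd ℂ) (W ((l:ℤ)+τn).toNat k') *
              Complex.exp (-Complex.I * ((((l:ℤ)+τn).toNat : ℂ)*(β:ℂ) + (k':ℂ)*(α:ℂ))))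
           else 0) := by
    intro l; split <;> simp
  simp only [hsplit]
  have hpk : ∀ l : ℕ,
      (∑ k ∈ range K, ∑ k' ∈ range K,
        (if 0 ≤ (l:ℤ) + τn ∧ (l:ℤ) + τn < (L:ℤ) then
          (W l k * Complex.exp (Complex.I * ((l:ℂ)*(β:ℂ) + (k:ℂ)*(α:ℂ)))) *
          ((starRingEnd ℂ) (W ((l:ℤ)+τn).toNat k') *
            Complex.exp (-Complex.I * ((((l:ℤ)+τn).toNat : ℂ)*(β:ℂ) + (k':ℂ)*(α:ℂ))))
         else 0))
      = ∑ τm ∈ Finset.Icc (1-(K:ℤ)) ((K:ℤ)-1), ∑ k ∈ range K,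
          (if 0 ≤ (k:ℤ) + τm ∧ (k:ℤ) + τm < (K:ℤ) then
            (if 0 ≤ (l:ℤ) + τn ∧ (l:ℤ) + τn < (L:ℤ) then
              (W l k * Complex.exp (Complex.I * ((l:ℂ)*(β:ℂ) + (k:ℂ)*(α:ℂ)))) *
              ((starRingEnd ℂ) (W ((l:ℤ)+τn).toNat ((k:ℤ)+τm).toNat) *
                Complex.exp (-Complex.I * ((((l:ℤ)+τn).toNat : ℂ)*(β:ℂ) + ((((k:ℤ)+τm).toNat:ℕ):ℂ)*(α:ℂ))))
             else 0)
           else 0) := by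
    intro l
    exact pair_sum K (fun k k' =>
      if 0 ≤ (l:ℤ) + τn ∧ (l:ℤ) + τn < (L:ℤ) then
        (W l k * Complex.exp (Complex.I * ((l:ℂ)*(β:ℂ) + (k:ℂ)*(α:ℂ)))) *
        ((starRingEnd ℂ) (W ((l:ℤ)+τn).toNat k') *
          Complex.exp (-Complex.I * ((((l:ℤ)+τn).toNat : ℂ)*(β:ℂ) + (k':ℂ)*(α:ℂ))))
       else 0)
  simp only [hpk]
  rw [Finset.sum_comm]
  refine Finset.sum_congr rfl fun τm hτm => ?_
  rw [aacf2, Finset.sum_mul]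
  refine Finset.sum_congr rfl fun l hl => ?_
  rw [Finset.sum_mul]
  refine Finset.sum_congr rfl fun k hk => ?_
  rw [Finset.mem_range] at hl hk
  by_cases hcl : 0 ≤ (l:ℤ) + τn ∧ (l:ℤ) + τn < (L:ℤ)
  · by_cases hck : 0 ≤ (k:ℤ) + τm ∧ (k:ℤ) + τm < (K:ℤ)
    · rw [if_pos hck, if_pos hcl, if_pos ⟨hcl.1, hcl.2, hck.1, hck.2⟩]
      have hl' : ((((l:ℤ)+τn).toNat : ℕ) : ℂ) = (l:ℂ) + (τn:ℂ) := by
        have h := Int.toNat_of_nonneg hcl.1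
        exact_mod_cast congrArg (fun z : ℤ => (z : ℂ)) h
      have hk' : ((((k:ℤ)+τm).toNat : ℕ) : ℂ) = (k:ℂ) + (τm:ℂ) := by
        have h := Int.toNat_of_nonneg hck.1
        exact_mod_cast congrArg (fun z : ℤ => (z : ℂ)) h
      rw [hl', hk']
      rw [mul_mul_mul_comm, ← Complex.exp_add]
      congr 2
      ring
    · rw [if_neg hck, if_neg (by tauto), zero_mul]
  · by_cases hck : 0 ≤ (k:ℤ) + τm ∧ (k:ℤ) + τm < (K:ℤ)
    · rw [if_pos hck, if_neg hcl, if_neg (by tauto), zero_mul]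
    · rw [if_neg hck, if_neg (by tauto), zero_mul]


lemma aacf2_zero (L K : ℕ) (W : ℕ → ℕ → ℂ)
    (hW : ∀ l < L, ∀ k < K, ‖W l k‖ = 1) :
    aacf2 L K W 0 0 = (L:ℂ) * (K:ℂ) := by
  rw [aacf2]
  have : ∀ l ∈ range L, ∀ k ∈ range K,
      (if 0 ≤ (l:ℤ) + 0 ∧ (l:ℤ) + 0 < (L:ℤ) ∧ 0 ≤ (k:ℤ) + 0 ∧ (k:ℤ) + 0 < (K:ℤ) then
        W l k * (starRingEnd ℂ) (W ((l:ℤ)+0).toNat ((k:ℤ)+0).toNat) else 0) = 1 := by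
    intro l hl k hk
    rw [Finset.mem_range] at hl hk
    rw [if_pos (by constructor <;> omega)]
    simp only [add_zero, Int.toNat_natCast]
    rw [Complex.mul_conj, Complex.normSq_eq_norm_sq, hW l hl k hk]
    norm_num
  calc ∑ l ∈ range L, ∑ k ∈ range K,
      (if 0 ≤ (l:ℤ) + 0 ∧ (l:ℤ) + 0 < (L:ℤ) ∧ 0 ≤ (k:ℤ) + 0 ∧ (k:ℤ) + 0 < (K:ℤ) then
        W l k * (starRingEnd ℂ) (W ((l:ℤ)+0).toNat ((k:ℤ)+0).toNat) else 0)
      = ∑ l ∈ range L, ∑ k ∈ range K, (1:ℂ) := by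
        exact Finset.sum_congr rfl fun l hl => Finset.sum_congr rfl fun k hk => this l hl k hk
    _ = (L:ℂ) * (K:ℂ) := by simp [mul_comm]

lemma golay_power (L K : ℕ) (hL : 1 ≤ L) (hK : 1 ≤ K) (U V : ℕ → ℕ → ℂ)
    (hU : ∀ l < L, ∀ k < K, ‖U l k‖ = 1)
    (hV : ∀ l < L, ∀ k < K, ‖V l k‖ = 1)
    (hG : IsGolayArrayPair L K U V) (α β : ℝ) :
    arrayFactor2 L K U α β * (starRingEnd ℂ) (arrayFactor2 L K U α β)
    + arrayFactor2 L K V α β * (starRingEnd ℂ) (arrayFactor2 L K V α β)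
    = 2 * (L:ℂ) * (K:ℂ) := by
  rw [FconjF, FconjF, ← Finset.sum_add_distrib]
  have hcomb : ∀ τn ∈ Finset.Icc (1-(L:ℤ)) ((L:ℤ)-1),
      (∑ τm ∈ Finset.Icc (1-(K:ℤ)) ((K:ℤ)-1),
        aacf2 L K U τn τm * Complex.exp (-Complex.I * ((τn:ℂ)*(β:ℂ) + (τm:ℂ)*(α:ℂ))))
      + (∑ τm ∈ Finset.Icc (1-(K:ℤ)) ((K:ℤ)-1),
        aacf2 L K V τn τm * Complex.exp (-Complex.I * ((τn:ℂ)*(β:ℂ) + (τm:ℂ)*(α:ℂ))))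
      = ∑ τm ∈ Finset.Icc (1-(K:ℤ)) ((K:ℤ)-1),
        (aacf2 L K U τn τm + aacf2 L K V τn τm) *
          Complex.exp (-Complex.I * ((τn:ℂ)*(β:ℂ) + (τm:ℂ)*(α:ℂ))) := by
    intro τn _
    rw [← Finset.sum_add_distrib]
    exact Finset.sum_congr rfl fun τm _ => by ring
  rw [Finset.sum_congr rfl hcomb]
  rw [Finset.sum_eq_single (0:ℤ)]
  · rw [Finset.sum_eq_single (0:ℤ)]
    · rw [aacf2_zero L K U hU, aacf2_zero L K V hV]
      simp
      ring
    · intro τm hτm hτm0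
      rw [Finset.mem_Icc] at hτm
      rw [hG 0 τm (by simp; omega) (by rw [abs_le]; omega) (by tauto), zero_mul]
    · intro h
      exact absurd (Finset.mem_Icc.2 (by omega)) h
  · intro τn hτn hτn0
    rw [Finset.mem_Icc] at hτn
    refine Finset.sum_eq_zero fun τm hτm => ?_
    rw [Finset.mem_Icc] at hτm
    rw [hG τn τm (by rw [abs_le]; omega) (by rw [abs_le]; omega) (by tauto), zero_mul]
  · intro h
    exact absurd (Finset.mem_Icc.2 (by omega)) h

lemma quad_sum (L N K M : ℕ) (F : ℕ → ℕ → ℂ) :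
    ∑ r ∈ range (L*N), ∑ c ∈ range (K*M), F r c
    = ∑ l ∈ range L, ∑ n ∈ range N, ∑ k ∈ range K, ∑ m ∈ range M, F (l*N+n) (k*M+m) := by
  rw [sum_range_mul_eq L N]
  exact Finset.sum_congr rfl fun l _ => Finset.sum_congr rfl fun n _ =>
    sum_range_mul_eq K M _

lemma conj_af2 (N M : ℕ) (Q : ℕ → ℕ → ℂ) (ψy ψz : ℝ) :
    (starRingEnd ℂ) (arrayFactor2 N M Q ψy ψz)
    = ∑ n ∈ range N, ∑ m ∈ range M, (starRingEnd ℂ) (Q n m) *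
        Complex.exp (-Complex.I * ((n:ℂ)*(ψz:ℂ) + (m:ℂ)*(ψy:ℂ))) := by
  simp only [arrayFactor2, map_sum, map_mul, ← Complex.exp_conj, map_add,
    Complex.conj_I, Complex.conj_ofReal, map_natCast]

lemma af2_prod (L K N M : ℕ) (A B : ℕ → ℕ → ℂ) (ψy ψz : ℝ) :
    arrayFactor2 L K A ((M:ℝ)*ψy) ((N:ℝ)*ψz) * arrayFactor2 N M B ψy ψz
    = ∑ l ∈ range L, ∑ n ∈ range N, ∑ k ∈ range K, ∑ m ∈ range M,
        (A l k * B n m) *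
          Complex.exp (Complex.I * (((l*N+n : ℕ):ℂ)*(ψz:ℂ) + ((k*M+m : ℕ):ℂ)*(ψy:ℂ))) := by
  rw [arrayFactor2, arrayFactor2, Finset.sum_mul_sum]
  refine Finset.sum_congr rfl fun l _ => Finset.sum_congr rfl fun n _ => ?_
  rw [Finset.sum_mul_sum]
  refine Finset.sum_congr rfl fun k _ => Finset.sum_congr rfl fun m _ => ?_
  rw [mul_mul_mul_comm, ← Complex.exp_add]
  congr 2
  push_cast
  ring

lemma expand_factor (L K N M : ℕ) (hN : 1 ≤ N) (hM : 1 ≤ M)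
    (X Y P Q W : ℕ → ℕ → ℂ) (ε : ℂ)
    (h1 : ∀ l < L, ∀ k < K, ∀ n < N, ∀ m < M, W (l*N+n) (k*M+m) = X l k * P n m)
    (h2 : ∀ l < L, ∀ k < K, ∀ n < N, ∀ m < M,
      W (L*N + l*N + n) (k*M+m) = ε * (Y l k * (starRingEnd ℂ) (Q (N-1-n) (M-1-m))))
    (ψy ψz : ℝ) :
    arrayFactor2 (2*L*N) (K*M) W ψy ψz
    = arrayFactor2 L K X ((M:ℝ)*ψy) ((N:ℝ)*ψz) * arrayFactor2 N M P ψy ψz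
      + ε * Complex.exp (Complex.I * (((L*N : ℕ):ℂ)*(ψz:ℂ) + ((N-1 : ℕ):ℂ)*(ψz:ℂ)
            + ((M-1 : ℕ):ℂ)*(ψy:ℂ)))
        * (arrayFactor2 L K Y ((M:ℝ)*ψy) ((N:ℝ)*ψz)
            * (starRingEnd ℂ) (arrayFactor2 N M Q ψy ψz)) := by
  have h2LN : 2*L*N = L*N + L*N := by ring
  rw [arrayFactor2, h2LN, Finset.sum_range_add, quad_sum, quad_sum]
  congr 1
  · rw [af2_prod]
    refine Finset.sum_congr rfl fun l hl => Finset.sum_congr rfl fun n hn => ?_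
    refine Finset.sum_congr rfl fun k hk => Finset.sum_congr rfl fun m hm => ?_
    rw [Finset.mem_range] at hl hn hk hm
    rw [h1 l hl k hk n hn m hm]
  · rw [conj_af2, arrayFactor2, Finset.sum_mul_sum]
    rw [Finset.mul_sum]
    refine Finset.sum_congr rfl fun l hl => ?_
    rw [Finset.mul_sum]
    conv_lhs => rw [← Finset.sum_range_reflect]
    refine Finset.sum_congr rfl fun n hn => ?_
    rw [Finset.sum_mul_sum, Finset.mul_sum]
    refine Finset.sum_congr rfl fun k hk => ?_
    rw [Finset.mul_sum]
    conv_lhs => rw [← Finset.sum_range_reflect]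
    refine Finset.sum_congr rfl fun m hm => ?_
    rw [Finset.mem_range] at hl hn hk hm
    rw [← add_assoc, h2 l hl k hk (N-1-n) (by omega) (M-1-m) (by omega),
      show N-1-(N-1-n) = n by omega, show M-1-(M-1-m) = m by omega]
    have hE : Complex.exp (Complex.I*((((L*N+l*N+(N-1-n)) : ℕ):ℂ)*(ψz:ℂ)
          + (((k*M+(M-1-m)) : ℕ):ℂ)*(ψy:ℂ)))
        = Complex.exp (Complex.I * (((L*N : ℕ):ℂ)*(ψz:ℂ) + ((N-1 : ℕ):ℂ)*(ψz:ℂ)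
              + ((M-1 : ℕ):ℂ)*(ψy:ℂ)))
          * Complex.exp (Complex.I * ((l:ℂ)*((((N:ℝ)*ψz):ℝ):ℂ) + (k:ℂ)*((((M:ℝ)*ψy):ℝ):ℂ)))
          * Complex.exp (-Complex.I * ((n:ℂ)*(ψz:ℂ) + (m:ℂ)*(ψy:ℂ))) := by
      rw [← Complex.exp_add, ← Complex.exp_add]
      congr 1
      push_cast [Nat.cast_sub (show n ≤ N-1 by omega), Nat.cast_sub (show m ≤ M-1 by omega),
        Nat.cast_sub hN, Nat.cast_sub hM]
      ring
    rw [hE]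
    ring

end Helpers

/-- Proposition 4, vertical variant: expanding a two-dimensional protoarray by a
Golay complementary array pair of expanders, stacking vertically, yields an array
whose sum power pattern is `2LK` times that of the protoarray. -/
theorem ura_expansion_vertical (L K N M : ℕ)
    (hL : 1 ≤ L) (hK : 1 ≤ K) (hN : 1 ≤ N) (hM : 1 ≤ M)
    (U V WPA WPB WA WB : ℕ → ℕ → ℂ)
    (hU : ∀ l < L, ∀ k < K, ‖U l k‖ = 1)
    (hV : ∀ l < L, ∀ k < K, ‖V l k‖ = 1)
    (hGolay : IsGolayArrayPair L K U V)
    (hA1 : ∀ l < L, ∀ k < K, ∀ n < N, ∀ m < M,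
      WA (l * N + n) (k * M + m) = U l k * WPA n m)
    (hA2 : ∀ l < L, ∀ k < K, ∀ n < N, ∀ m < M,
      WA (L * N + l * N + n) (k * M + m) =
        -(V l k * (starRingEnd ℂ) (WPB (N - 1 - n) (M - 1 - m))))
    (hB1 : ∀ l < L, ∀ k < K, ∀ n < N, ∀ m < M,
      WB (l * N + n) (k * M + m) = U l k * WPB n m)
    (hB2 : ∀ l < L, ∀ k < K, ∀ n < N, ∀ m < M,
      WB (L * N + l * N + n) (k * M + m) =
        V l k * (starRingEnd ℂ) (WPA (N - 1 - n) (M - 1 - m)))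
    (ψy ψz : ℝ) :
    ‖arrayFactor2 (2 * L * N) (K * M) WA ψy ψz‖ ^ 2 +
        ‖arrayFactor2 (2 * L * N) (K * M) WB ψy ψz‖ ^ 2 =
      2 * L * K * (‖arrayFactor2 N M WPA ψy ψz‖ ^ 2 +
                    ‖arrayFactor2 N M WPB ψy ψz‖ ^ 2) := by
  
  have hA2' : ∀ l < L, ∀ k < K, ∀ n < N, ∀ m < M,
      WA (L*N + l*N + n) (k*M+m)
        = (-1 : ℂ) * (V l k * (starRingEnd ℂ) (WPB (N-1-n) (M-1-m))) := by
    intro l hl k hk n hn m hm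
    rw [hA2 l hl k hk n hn m hm]; ring
  have hB2' : ∀ l < L, ∀ k < K, ∀ n < N, ∀ m < M,
      WB (L*N + l*N + n) (k*M+m)
        = (1 : ℂ) * (V l k * (starRingEnd ℂ) (WPA (N-1-n) (M-1-m))) := by
    intro l hl k hk n hn m hm
    rw [hB2 l hl k hk n hn m hm]; ring
  have hA' := expand_factor L K N M hN hM U V WPA WPB WA (-1) hA1 hA2' ψy ψz
  have hB' := expand_factor L K N M hN hM U V WPB WPA WB (1) hB1 hB2' ψy ψz
  have hG' := golay_power L K hL hK U V hU hV hGolay ((M:ℝ)*ψy) ((N:ℝ)*ψz)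
  have hcc : Complex.exp (Complex.I * (((L*N : ℕ):ℂ)*(ψz:ℂ) + ((N-1 : ℕ):ℂ)*(ψz:ℂ)
          + ((M-1 : ℕ):ℂ)*(ψy:ℂ)))
        * (starRingEnd ℂ) (Complex.exp (Complex.I * (((L*N : ℕ):ℂ)*(ψz:ℂ)
          + ((N-1 : ℕ):ℂ)*(ψz:ℂ) + ((M-1 : ℕ):ℂ)*(ψy:ℂ)))) = 1 := by
    have hre : Complex.I * (((L*N : ℕ):ℂ)*(ψz:ℂ) + ((N-1 : ℕ):ℂ)*(ψz:ℂ)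
          + ((M-1 : ℕ):ℂ)*(ψy:ℂ))
        = ((((L*N : ℕ):ℝ)*ψz + ((N-1 : ℕ):ℝ)*ψz + ((M-1 : ℕ):ℝ)*ψy : ℝ) : ℂ)
            * Complex.I := by
      push_cast; ring
    rw [hre, Complex.mul_conj, Complex.normSq_eq_norm_sq, Complex.norm_exp_ofReal_mul_I]
    norm_num
  have key : arrayFactor2 (2*L*N) (K*M) WA ψy ψz
        * (starRingEnd ℂ) (arrayFactor2 (2*L*N) (K*M) WA ψy ψz)
      + arrayFactor2 (2*L*N) (K*M) WB ψy ψz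
        * (starRingEnd ℂ) (arrayFactor2 (2*L*N) (K*M) WB ψy ψz)
      = 2*(L:ℂ)*(K:ℂ) * (arrayFactor2 N M WPA ψy ψz
            * (starRingEnd ℂ) (arrayFactor2 N M WPA ψy ψz)
          + arrayFactor2 N M WPB ψy ψz
            * (starRingEnd ℂ) (arrayFactor2 N M WPB ψy ψz)) := by
    rw [hA', hB']
    simp only [map_add, map_mul, map_neg, map_one, Complex.conj_conj]
    linear_combination
      (arrayFactor2 N M WPA ψy ψz * (starRingEnd ℂ) (arrayFactor2 N M WPA ψy ψz)
        + arrayFactor2 N M WPB ψy ψz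
          * (starRingEnd ℂ) (arrayFactor2 N M WPB ψy ψz)) * hG'
      + (arrayFactor2 L K V ((M:ℝ)*ψy) ((N:ℝ)*ψz)
          * (starRingEnd ℂ) (arrayFactor2 L K V ((M:ℝ)*ψy) ((N:ℝ)*ψz))
          * (arrayFactor2 N M WPA ψy ψz
              * (starRingEnd ℂ) (arrayFactor2 N M WPA ψy ψz)
            + arrayFactor2 N M WPB ψy ψz
              * (starRingEnd ℂ) (arrayFactor2 N M WPB ψy ψz))) * hcc
  have cast2 : ∀ z : ℂ, ((‖z‖ : ℝ) : ℂ)^2 = z * (starRingEnd ℂ) z := fun z => by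
    rw [← Complex.ofReal_pow, Complex.sq_norm]
    exact (Complex.mul_conj z).symm
  rw [← Complex.ofReal_inj]
  push_cast
  rw [cast2, cast2, cast2, cast2]
  linear_combination key
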